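/- Let φ be a continuous linear functional on the bidual Lip_0(M)* (i.e. φ ∈ F(M)**). Then Σ_{n∈ℤ} ‖φ ∘ W_{Λ_n}‖ ≤ 45‖φ‖, where W_{Λ_n} is the operator of pointwise multiplication by Λ_n on Lip_0(M). -/

import Mathlib

open Filter Metric Topology NNReal


/-- The set of Lipschitz functions `M → ℝ` vanishing at the base point, as a
submodule of `M → ℝ`. -/
def Lip0Sub (M : Type*) [MetricSpace M] (base : M) : Submodule ℝ (M → ℝ) where
  carrier := {f | (∃ K, LipschitzWith K f) ∧ f base = 0}
  add_mem' := by
    rintro f g ⟨⟨Kf, hf⟩, hf0⟩ ⟨⟨Kg, hg⟩, hg0⟩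
    exact ⟨⟨Kf + Kg, hf.add hg⟩, by simp [Pi.add_apply, hf0, hg0]⟩
  zero_mem' := ⟨⟨0, LipschitzWith.const 0⟩, rfl⟩
  smul_mem' := by
    rintro c f ⟨⟨Kf, hf⟩, hf0⟩
    exact ⟨⟨‖c‖₊ * Kf, (lipschitzWith_smul c).comp hf⟩, by simp [Pi.smul_apply, hf0]⟩

/-- The space `Lip₀(M)` of Lipschitz functions vanishing at the base point.
(A type synonym, so that it carries the Lipschitz-norm topology rather than the
topology of pointwise convergence.) -/
def Lip0 (M : Type*) [MetricSpace M] (base : M) : Type _ := ↥(Lip0Sub M base)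

variable {M : Type*} [MetricSpace M] {base : M}

instance : AddCommGroup (Lip0 M base) :=
  inferInstanceAs (AddCommGroup ↥(Lip0Sub M base))

noncomputable instance : Module ℝ (Lip0 M base) :=
  inferInstanceAs (Module ℝ ↥(Lip0Sub M base))

/-- An element of `Lip₀(M)` is a function on `M`. -/
instance : CoeFun (Lip0 M base) (fun _ => M → ℝ) :=
  ⟨fun f => (Subtype.val f : M → ℝ)⟩

theorem Lip0.prop (f : Lip0 M base) :
    (∃ K, LipschitzWith K (f : M → ℝ)) ∧ (f : M → ℝ) base = 0 :=
  Subtype.prop f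

/-- The quantity defining the Lipschitz norm. -/
noncomputable def Lip0.lipNorm (f : Lip0 M base) : ℝ :=
  ⨆ p : M × M, |f p.1 - f p.2| / dist p.1 p.2

theorem Lip0.ratio_le (f : Lip0 M base) {K : ℝ≥0} (hK : LipschitzWith K (f : M → ℝ))
    (p : M × M) : |f p.1 - f p.2| / dist p.1 p.2 ≤ K := by
  rcases eq_or_ne p.1 p.2 with h | h
  · simp [h, K.coe_nonneg]
  · rw [div_le_iff₀ (dist_pos.2 h)]
    simpa [Real.dist_eq] using hK.dist_le_mul p.1 p.2

theorem Lip0.bddAbove (f : Lip0 M base) :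
    BddAbove (Set.range fun p : M × M => |f p.1 - f p.2| / dist p.1 p.2) := by
  obtain ⟨K, hK⟩ := f.prop.1
  exact ⟨K, by rintro r ⟨p, rfl⟩; exact f.ratio_le hK p⟩

theorem Lip0.ratio_le_lipNorm (f : Lip0 M base) (p : M × M) :
    |f p.1 - f p.2| / dist p.1 p.2 ≤ f.lipNorm :=
  le_ciSup f.bddAbove p

theorem Lip0.lipNorm_nonneg (f : Lip0 M base) : 0 ≤ f.lipNorm := by
  have := f.ratio_le_lipNorm (base, base)
  simpa using this

/-- The Lipschitz norm on `Lip₀(M)`: the best Lipschitz constant,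
`‖f‖ = sup_{x ≠ y} |f x - f y| / d(x,y)`. -/
noncomputable instance Lip0.normedAddCommGroup :
    NormedAddCommGroup (Lip0 M base) :=
  AddGroupNorm.toNormedAddCommGroup
    { toFun := fun f => f.lipNorm
      map_zero' := by
        have h : ∀ p : M × M,
            |(0 : Lip0 M base) p.1 - (0 : Lip0 M base) p.2| / dist p.1 p.2 = 0 := by
          intro p
          show |(0:ℝ) - 0| / _ = 0
          simp
        haveI : Nonempty (M × M) := ⟨(base, base)⟩
        simp only [Lip0.lipNorm, h, ciSup_const]
      add_le' := by
        intro f g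
        haveI : Nonempty (M × M) := ⟨(base, base)⟩
        apply ciSup_le
        intro p
        rcases eq_or_ne p.1 p.2 with h | h
        · have : dist p.1 p.2 = 0 := by simp [h]
          rw [this, div_zero]
          exact add_nonneg f.lipNorm_nonneg g.lipNorm_nonneg
        · have hd : (0:ℝ) < dist p.1 p.2 := dist_pos.2 h
          have h1 : |(f + g) p.1 - (f + g) p.2| ≤ |f p.1 - f p.2| + |g p.1 - g p.2| := by
            show |(f p.1 + g p.1) - (f p.2 + g p.2)| ≤ _
            rw [add_sub_add_comm]
            exact abs_add_le _ _
          calc |(f + g) p.1 - (f + g) p.2| / dist p.1 p.2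
              ≤ (|f p.1 - f p.2| + |g p.1 - g p.2|) / dist p.1 p.2 := by gcongr
            _ ≤ f.lipNorm + g.lipNorm := by
                rw [add_div]
                exact add_le_add (f.ratio_le_lipNorm p) (g.ratio_le_lipNorm p)
      neg' := by
        intro f
        show Lip0.lipNorm _ = Lip0.lipNorm _
        unfold Lip0.lipNorm
        congr 1
        funext p
        show |(- f p.1) - (- f p.2)| / _ = _
        rw [neg_sub_neg, abs_sub_comm]
      eq_zero_of_map_eq_zero' := by
        intro f hf
        have hconst : ∀ x y : M, f x = f y := by
          intro x y
          rcases eq_or_ne x y with h | h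
          · rw [h]
          · have h1 : |f x - f y| / dist x y ≤ 0 := hf ▸ f.ratio_le_lipNorm (x, y)
            have h2 : (0:ℝ) ≤ |f x - f y| / dist x y :=
              div_nonneg (abs_nonneg _) dist_nonneg
            rcases div_eq_zero_iff.1 (le_antisymm h1 h2) with h3 | h3
            · exact sub_eq_zero.1 (abs_eq_zero.1 h3)
            · exact absurd h3 (dist_ne_zero.2 h)
        have hzero : ∀ x, f x = 0 := fun x => (hconst x base).trans f.prop.2
        exact Subtype.ext (funext hzero) }

noncomputable instance Lip0.normedSpace : NormedSpace ℝ (Lip0 M base) :=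
  { norm_smul_le := by
      intro c f
      haveI : Nonempty (M × M) := ⟨(base, base)⟩
      apply ciSup_le
      intro p
      have heq : |(c • f) p.1 - (c • f) p.2| / dist p.1 p.2
          = |c| * (|f p.1 - f p.2| / dist p.1 p.2) := by
        show |c * f p.1 - c * f p.2| / dist p.1 p.2 = _
        rw [← mul_sub, abs_mul, mul_div_assoc]
      rw [heq]
      calc |c| * (|f p.1 - f p.2| / dist p.1 p.2)
          ≤ |c| * f.lipNorm :=
            mul_le_mul_of_nonneg_left (f.ratio_le_lipNorm p) (abs_nonneg c)
        _ = ‖c‖ * ‖f‖ := rfl }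

/-- Evaluation functional `δ(x) ∈ Lip₀(M)*`. -/
noncomputable def deltaF (base : M) (x : M) : StrongDual ℝ (Lip0 M base) :=
  LinearMap.mkContinuous
    { toFun := fun f => f x
      map_add' := fun _ _ => rfl
      map_smul' := fun _ _ => rfl }
    (dist x base)
    (by
      intro f
      show |f x| ≤ dist x base * ‖f‖
      rcases eq_or_ne x base with h | h
      · simp [h, f.prop.2, mul_nonneg dist_nonneg f.lipNorm_nonneg]
      · have h1 : |f x - f base| / dist x base ≤ ‖f‖ := f.ratio_le_lipNorm (x, base)
        have h2 : |f x - f base| ≤ dist x base * ‖f‖ := by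
          rw [div_le_iff₀ (dist_pos.2 (by simpa using h))] at h1
          linarith [h1]
        simpa [f.prop.2] using h2)

/-- The Lipschitz-free space `F(M)`, realized as the closed linear span of the
evaluation functionals inside `Lip₀(M)*`. -/
noncomputable def FreeSpace (base : M) : Set (StrongDual ℝ (Lip0 M base)) :=
  closure ((Submodule.span ℝ (Set.range (deltaF base)) :
    Submodule ℝ (StrongDual ℝ (Lip0 M base))) : Set (StrongDual ℝ (Lip0 M base)))

/-- A functional `φ ∈ Lip₀(M)* = F(M)**` is *normal* if for every norm-bounded net
converging pointwise and monotonically to `f ∈ Lip₀(M)`, the values `φ(fᵢ)` converge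
to `φ(f)`. -/
def IsNormal (base : M) (φ : StrongDual ℝ (Lip0 M base)) : Prop :=
  ∀ (ι : Type) [Preorder ι] [Nonempty ι] [IsDirected ι (· ≤ ·)]
    (F : ι → Lip0 M base) (f : Lip0 M base) (C : ℝ),
    (∀ i, ‖F i‖ ≤ C) →
    ((∀ x, Monotone fun i => (F i) x) ∨ (∀ x, Antitone fun i => (F i) x)) →
    (∀ x, Tendsto (fun i => (F i) x) atTop (𝓝 (f x))) →
    Tendsto (fun i => φ (F i)) atTop (𝓝 (φ f))



variable {M : Type*} [MetricSpace M]

/-- The "tent" function `Λ_n`, supported on the annulus `2^(n-1) < d(x,0) < 2^(n+1)`,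
equal to `1` on the sphere `d(x,0) = 2^n` and affine in `d(x,0)` in between. -/
noncomputable def Lam (base : M) (n : ℤ) (x : M) : ℝ :=
  max 0 (min ((2:ℝ) ^ (1 - n) * dist x base - 1) (2 - (2:ℝ) ^ (-n) * dist x base))

/-- The "plateau" function `Π_n`, equal to `1` on the annulus `2^(-n) ≤ d(x,0) ≤ 2^n`,
vanishing for `d(x,0) ≤ 2^(-(n+1))` and `d(x,0) ≥ 2^(n+1)`, affine in between. -/
noncomputable def Pla (base : M) (n : ℕ) (x : M) : ℝ :=
  max 0 (min 1 (min ((2:ℝ) ^ ((n:ℤ) + 1) * dist x base - 1)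
    (2 - (2:ℝ) ^ (-(n:ℤ)) * dist x base)))

/-- The cutoff function `h_n`, equal to `1` on the ball `d(x,0) ≤ 2^n`, vanishing for
`d(x,0) ≥ 2^(n+1)`, and affine in `d(x,0)` in between. -/
noncomputable def hfun (base : M) (n : ℤ) (x : M) : ℝ :=
  max 0 (min 1 (2 - (2:ℝ) ^ (-n) * dist x base))


section KaltonAux

variable {M : Type*} [MetricSpace M] {base : M}

theorem Lip0.norm_def (f : Lip0 M base) : ‖f‖ = f.lipNorm := rfl

theorem Lip0.abs_sub_le (f : Lip0 M base) (x y : M) :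
    |f x - f y| ≤ ‖f‖ * dist x y := by
  rcases eq_or_ne x y with h | h
  · simp [h]
  · have h1 := f.ratio_le_lipNorm (x, y)
    have hd : (0:ℝ) < dist x y := dist_pos.2 h
    rw [div_le_iff₀ hd] at h1
    exact h1

theorem Lip0.abs_le_dist (f : Lip0 M base) (x : M) :
    |f x| ≤ ‖f‖ * dist x base := by
  have := f.abs_sub_le x base
  simpa [f.prop.2] using this

theorem Lip0.coe_sum {ι : Type*} (A : Finset ι) (g : ι → Lip0 M base) (x : M) :
    ((∑ n ∈ A, g n : Lip0 M base) : M → ℝ) x = ∑ n ∈ A, (g n) x :=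
  map_sum (AddMonoidHom.mk' (fun f : Lip0 M base => (f : M → ℝ) x) (fun _ _ => rfl)) _ _

theorem lam_eq (n : ℤ) (x : M) :
    Lam base n x = max 0 (min ((2 * dist x base - 2 ^ n) / 2 ^ n)
      ((2 * 2 ^ n - dist x base) / 2 ^ n)) := by
  have hP : ((2:ℝ) ^ n) ≠ 0 := by positivity
  have h1 : (2:ℝ) ^ (1 - n) = 2 / 2 ^ n := by
    rw [zpow_sub₀ (two_ne_zero), zpow_one]
  have h2 : (2:ℝ) ^ (-n) = 1 / 2 ^ n := by rw [zpow_neg, one_div]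
  rw [Lam, h1, h2]
  congr 1
  congr 1 <;> field_simp

theorem lam_nonneg (n : ℤ) (x : M) : 0 ≤ Lam base n x := le_max_left _ _

theorem lam_le_one (n : ℤ) (x : M) : Lam base n x ≤ 1 := by
  have hP : (0:ℝ) < 2 ^ n := by positivity
  rw [lam_eq]
  apply max_le (by norm_num)
  rcases le_total (dist x base) ((2:ℝ) ^ n) with h | h
  · exact (min_le_left _ _).trans (by rw [div_le_one hP]; linarith)
  · exact (min_le_right _ _).trans (by rw [div_le_one hP]; linarith)

private theorem abs_max0_sub (A B : ℝ) : |max 0 A - max 0 B| ≤ |A - B| := by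
  have h := abs_max_sub_max_le_max (0:ℝ) A 0 B
  simpa [max_eq_right (abs_nonneg (A - B))] using h

theorem lam_abs_sub (n : ℤ) (x y : M) :
    |Lam base n x - Lam base n y| * 2 ^ n ≤ 2 * dist x y := by
  have hP : (0:ℝ) < 2 ^ n := by positivity
  have hrs : |dist x base - dist y base| ≤ dist x y := abs_dist_sub_le x y base
  rw [lam_eq, lam_eq]
  set r := dist x base
  set s := dist y base
  have hstep : |max 0 (min ((2 * r - 2 ^ n) / 2 ^ n) ((2 * 2 ^ n - r) / 2 ^ n)) -
      max 0 (min ((2 * s - 2 ^ n) / 2 ^ n) ((2 * 2 ^ n - s) / 2 ^ n))| ≤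
      2 * dist x y / 2 ^ n := by
    refine (abs_max0_sub _ _).trans ?_
    refine (abs_min_sub_min_le_max _ _ _ _).trans ?_
    apply max_le
    · have e1 : (2 * r - 2 ^ n) / 2 ^ n - (2 * s - 2 ^ n) / 2 ^ n
          = 2 * (r - s) / 2 ^ n := by field_simp; ring
      rw [e1, abs_div, abs_of_pos hP]
      apply div_le_div_of_nonneg_right ?_ hP.le
      rw [abs_mul]
      have h2 : |(2:ℝ)| = 2 := by norm_num
      rw [h2]
      linarith
    · have e2 : (2 * 2 ^ n - r) / 2 ^ n - (2 * 2 ^ n - s) / 2 ^ n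
          = (s - r) / 2 ^ n := by field_simp; ring
      rw [e2, abs_div, abs_of_pos hP]
      apply div_le_div_of_nonneg_right ?_ hP.le
      rw [abs_sub_comm]
      calc |r - s| ≤ dist x y := hrs
        _ ≤ 2 * dist x y := by linarith [dist_nonneg (x := x) (y := y)]
  calc _ ≤ (2 * dist x y / 2 ^ n) * 2 ^ n :=
        mul_le_mul_of_nonneg_right hstep hP.le
    _ = 2 * dist x y := div_mul_cancel₀ _ hP.ne'

theorem lam_ne_zero_facts {n : ℤ} {x : M} (h : Lam base n x ≠ 0) :
    2 ^ n < 2 * dist x base ∧ dist x base < 2 * 2 ^ n ∧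
    Lam base n x * 2 ^ n ≤ 2 * dist x base - 2 ^ n ∧
    Lam base n x * 2 ^ n ≤ 2 * 2 ^ n - dist x base := by
  have hP : (0:ℝ) < 2 ^ n := by positivity
  rw [lam_eq] at h ⊢
  set r := dist x base
  set t := min ((2 * r - 2 ^ n) / 2 ^ n) ((2 * 2 ^ n - r) / 2 ^ n) with ht
  have htpos : 0 < t := by
    rcases lt_or_ge 0 t with h' | h'
    · exact h'
    · exact absurd (max_eq_left h') h
  have ha : 0 < (2 * r - 2 ^ n) / 2 ^ n := lt_of_lt_of_le htpos (min_le_left _ _)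
  have hb : 0 < (2 * 2 ^ n - r) / 2 ^ n := lt_of_lt_of_le htpos (min_le_right _ _)
  have ha' : 0 < 2 * r - 2 ^ n := by
    have := mul_pos ha hP
    rwa [div_mul_cancel₀ _ hP.ne'] at this
  have hb' : 0 < 2 * 2 ^ n - r := by
    have := mul_pos hb hP
    rwa [div_mul_cancel₀ _ hP.ne'] at this
  have hmax : max 0 t = t := max_eq_right htpos.le
  rw [hmax]
  refine ⟨by linarith, by linarith, ?_, ?_⟩
  · have := (le_div_iff₀ hP).mp (min_le_left ((2 * r - 2 ^ n) / 2 ^ n) ((2 * 2 ^ n - r) / 2 ^ n))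
    exact this
  · exact (le_div_iff₀ hP).mp (min_le_right _ _)

theorem lam_eq_zero_cases {n : ℤ} {y : M} (h : Lam base n y = 0) :
    2 * dist y base ≤ 2 ^ n ∨ 2 * 2 ^ n ≤ dist y base := by
  have hP : (0:ℝ) < 2 ^ n := by positivity
  rw [lam_eq] at h
  by_contra hc
  push_neg at hc
  have ha : 0 < (2 * dist y base - 2 ^ n) / 2 ^ n := div_pos (by linarith [hc.1]) hP
  have hb : 0 < (2 * 2 ^ n - dist y base) / 2 ^ n := div_pos (by linarith [hc.2]) hP
  have hmin : 0 < min ((2 * dist y base - 2 ^ n) / 2 ^ n)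
      ((2 * 2 ^ n - dist y base) / 2 ^ n) := lt_min ha hb
  have := le_max_right (0:ℝ) (min ((2 * dist y base - 2 ^ n) / 2 ^ n)
      ((2 * 2 ^ n - dist y base) / 2 ^ n))
  rw [h] at this
  linarith

theorem cross_bound {f : Lip0 M base} (hf : ‖f‖ ≤ 1) (n : ℤ) (x y : M)
    (h0 : Lam base n y = 0) : |f x| * Lam base n x ≤ 4 * dist x y := by
  have hP : (0:ℝ) < 2 ^ n := by positivity
  have hd : (0:ℝ) ≤ dist x y := dist_nonneg
  by_cases hx : Lam base n x = 0
  · rw [hx, mul_zero]; positivity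
  · obtain ⟨h1, h2, h3, h4⟩ := lam_ne_zero_facts hx
    have hfx : |f x| ≤ dist x base :=
      (f.abs_le_dist x).trans (mul_le_of_le_one_left dist_nonneg hf)
    have hrs := abs_le.mp (abs_dist_sub_le x y base)
    have hL0 : 0 ≤ Lam base n x := lam_nonneg n x
    have hF0 : 0 ≤ |f x| := abs_nonneg _
    rcases lam_eq_zero_cases h0 with hc | hc
    · have key : |f x| * (Lam base n x * 2 ^ n) ≤ (2 * 2 ^ n) * (2 * dist x y) := by
        apply mul_le_mul (by linarith) (by linarith)
          (mul_nonneg hL0 hP.le) (by positivity)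
      nlinarith [hP]
    · have key : |f x| * (Lam base n x * 2 ^ n) ≤ (2 * 2 ^ n) * (2 * dist x y) := by
        apply mul_le_mul (by linarith) (by linarith)
          (mul_nonneg hL0 hP.le) (by positivity)
      nlinarith [hP]

theorem term_cross {f : Lip0 M base} (hf : ‖f‖ ≤ 1) (n : ℤ) (x y : M)
    (h : Lam base n x = 0 ∨ Lam base n y = 0) :
    |f x * Lam base n x - f y * Lam base n y| ≤ 4 * dist x y := by
  rcases h with h | h
  · rw [h, mul_zero, zero_sub, abs_neg, abs_mul, abs_of_nonneg (lam_nonneg n y)]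
    rw [dist_comm]
    exact cross_bound hf n y x h
  · rw [h, mul_zero, sub_zero, abs_mul, abs_of_nonneg (lam_nonneg n x)]
    exact cross_bound hf n x y h

theorem term_same {f : Lip0 M base} (hf : ‖f‖ ≤ 1) (n : ℤ) (x y : M) :
    |f x * Lam base n x - f y * Lam base n y| ≤ 5 * dist x y := by
  have hd : (0:ℝ) ≤ dist x y := dist_nonneg
  by_cases hx : Lam base n x = 0
  · exact (term_cross hf n x y (Or.inl hx)).trans (by linarith)
  · obtain ⟨h1, h2, h3, h4⟩ := lam_ne_zero_facts hx
    have hP : (0:ℝ) < 2 ^ n := by positivity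
    have hfx : |f x| ≤ dist x base :=
      (f.abs_le_dist x).trans (mul_le_of_le_one_left dist_nonneg hf)
    have hsub : |f x - f y| ≤ dist x y :=
      (f.abs_sub_le x y).trans (mul_le_of_le_one_left dist_nonneg hf)
    have hL := lam_abs_sub (base := base) n x y
    have hy1 : Lam base n y ≤ 1 := lam_le_one n y
    have hy0 : 0 ≤ Lam base n y := lam_nonneg n y
    have key : f x * Lam base n x - f y * Lam base n y
        = f x * (Lam base n x - Lam base n y) + (f x - f y) * Lam base n y := by ring
    rw [key]
    have t1 : |f x| * |Lam base n x - Lam base n y| ≤ 4 * dist x y := by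
      have hh : |f x| * (|Lam base n x - Lam base n y| * 2 ^ n)
          ≤ (2 * 2 ^ n) * (2 * dist x y) :=
        mul_le_mul (by linarith) hL (mul_nonneg (abs_nonneg _) hP.le) (by positivity)
      nlinarith [hP]
    have t2 : |f x - f y| * Lam base n y ≤ dist x y := by
      calc |f x - f y| * Lam base n y ≤ dist x y * 1 :=
            mul_le_mul hsub hy1 hy0 hd
        _ = dist x y := mul_one _
    calc |f x * (Lam base n x - Lam base n y) + (f x - f y) * Lam base n y|
        ≤ |f x * (Lam base n x - Lam base n y)| + |(f x - f y) * Lam base n y| :=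
          abs_add_le _ _
      _ = |f x| * |Lam base n x - Lam base n y| + |f x - f y| * Lam base n y := by
          rw [abs_mul, abs_mul, abs_of_nonneg hy0]
      _ ≤ 4 * dist x y + dist x y := add_le_add t1 t2
      _ = 5 * dist x y := by ring

theorem supp_unique {n m : ℤ} {x : M} (hx : Lam base n x ≠ 0) (hy : Lam base m x ≠ 0)
    (he : Even (n - m)) : n = m := by
  obtain ⟨hn1, hn2, -, -⟩ := lam_ne_zero_facts hx
  obtain ⟨hm1, hm2, -, -⟩ := lam_ne_zero_facts hy
  have e1 : (2:ℝ) ^ (m + 2) = 2 ^ m * 4 := by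
    rw [zpow_add₀ (by norm_num : (2:ℝ) ≠ 0)]; norm_num
  have e2 : (2:ℝ) ^ (n + 2) = 2 ^ n * 4 := by
    rw [zpow_add₀ (by norm_num : (2:ℝ) ≠ 0)]; norm_num
  have h1 : (2:ℝ) ^ n < 2 ^ (m + 2) := by rw [e1]; nlinarith
  have h2 : (2:ℝ) ^ m < 2 ^ (n + 2) := by rw [e2]; nlinarith
  have k1 : n < m + 2 := (zpow_lt_zpow_iff_right₀ (by norm_num : (1:ℝ) < 2)).mp h1
  have k2 : m < n + 2 := (zpow_lt_zpow_iff_right₀ (by norm_num : (1:ℝ) < 2)).mp h2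
  obtain ⟨t, ht⟩ := he
  omega

theorem pointwise_bound (A : Finset ℤ) (hsep : ∀ n ∈ A, ∀ m ∈ A, Even (n - m))
    {base : M} (f : ℤ → Lip0 M base) (hf : ∀ n, ‖f n‖ ≤ 1) (x y : M) :
    |∑ n ∈ A, (f n x * Lam base n x - f n y * Lam base n y)| ≤ 8 * dist x y := by
  have hd : (0:ℝ) ≤ dist x y := dist_nonneg
  set t : ℤ → ℝ := fun n => f n x * Lam base n x - f n y * Lam base n y with ht
  have habs : |∑ n ∈ A, t n| ≤ ∑ n ∈ A, |t n| := Finset.abs_sum_le_sum_abs _ _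
  refine habs.trans ?_
  by_cases hcase : ∃ n ∈ A, Lam base n x ≠ 0 ∧ Lam base n y ≠ 0
  · obtain ⟨n0, hn0A, hn0x, hn0y⟩ := hcase
    have hz : ∀ m ∈ A, m ≠ n0 → |t m| = 0 := by
      intro m hmA hm
      have hx0 : Lam base m x = 0 := by
        by_contra hcon
        exact hm (supp_unique hcon hn0x (hsep m hmA n0 hn0A))
      have hy0 : Lam base m y = 0 := by
        by_contra hcon
        exact hm (supp_unique hcon hn0y (hsep m hmA n0 hn0A))
      simp [ht, hx0, hy0]
    have hsum : ∑ n ∈ A, |t n| = |t n0| :=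
      Finset.sum_eq_single_of_mem n0 hn0A hz
    rw [hsum]
    exact (term_same (hf n0) n0 x y).trans (by linarith)
  · push_neg at hcase
    have hbound : ∀ n ∈ A.filter (fun n => t n ≠ 0), |t n| ≤ 4 * dist x y := by
      intro n hn
      obtain ⟨hnA, -⟩ := Finset.mem_filter.mp hn
      rcases eq_or_ne (Lam base n x) 0 with h | h
      · exact term_cross (hf n) n x y (Or.inl h)
      · exact term_cross (hf n) n x y (Or.inr (hcase n hnA h))
    have hfilter : ∑ n ∈ A, |t n| = ∑ n ∈ A.filter (fun n => t n ≠ 0), |t n| := by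
      rw [Finset.sum_filter_of_ne]
      intro n _ h
      exact fun h0 => h (by simp [h0])
    have hcard : (A.filter (fun n => t n ≠ 0)).card ≤ 2 := by
      have hsub : A.filter (fun n => t n ≠ 0) ⊆
          A.filter (fun n => Lam base n x ≠ 0) ∪ A.filter (fun n => Lam base n y ≠ 0) := by
        intro n hn
        obtain ⟨hnA, hnt⟩ := Finset.mem_filter.mp hn
        rw [Finset.mem_union, Finset.mem_filter, Finset.mem_filter]
        rcases eq_or_ne (Lam base n x) 0 with h1 | h1
        · rcases eq_or_ne (Lam base n y) 0 with h2 | h2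
          · exact absurd (show t n = 0 by simp [ht, h1, h2]) hnt
          · exact Or.inr ⟨hnA, h2⟩
        · exact Or.inl ⟨hnA, h1⟩
      have c1 : (A.filter (fun n => Lam base n x ≠ 0)).card ≤ 1 := by
        apply Finset.card_le_one.mpr
        intro a ha b hb
        rw [Finset.mem_filter] at ha hb
        exact supp_unique ha.2 hb.2 (hsep a ha.1 b hb.1)
      have c2 : (A.filter (fun n => Lam base n y ≠ 0)).card ≤ 1 := by
        apply Finset.card_le_one.mpr
        intro a ha b hb
        rw [Finset.mem_filter] at ha hb
        exact supp_unique ha.2 hb.2 (hsep a ha.1 b hb.1)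
      calc (A.filter (fun n => t n ≠ 0)).card
          ≤ (A.filter (fun n => Lam base n x ≠ 0) ∪
              A.filter (fun n => Lam base n y ≠ 0)).card := Finset.card_le_card hsub
        _ ≤ (A.filter (fun n => Lam base n x ≠ 0)).card +
              (A.filter (fun n => Lam base n y ≠ 0)).card := Finset.card_union_le _ _
        _ ≤ 2 := by omega
    rw [hfilter]
    have := Finset.sum_le_card_nsmul (A.filter (fun n => t n ≠ 0)) (fun n => |t n|)
      (4 * dist x y) hbound
    rw [nsmul_eq_mul] at this
    refine this.trans ?_
    have hc : ((A.filter (fun n => t n ≠ 0)).card : ℝ) ≤ 2 := by exact_mod_cast hcard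
    nlinarith

end KaltonAux


section KaltonMain

variable {M : Type*} [MetricSpace M] {base : M}

theorem sum_W_norm_le (A : Finset ℤ) (hsep : ∀ n ∈ A, ∀ m ∈ A, Even (n - m))
    (f : ℤ → Lip0 M base) (hf : ∀ n, ‖f n‖ ≤ 1)
    (W : ℤ → (Lip0 M base →L[ℝ] Lip0 M base))
    (hW : ∀ (n : ℤ) (g : Lip0 M base) (x : M), (W n g) x = g x * Lam base n x) :
    ‖∑ n ∈ A, W n (f n)‖ ≤ 8 := by
  haveI : Nonempty (M × M) := ⟨(base, base)⟩
  rw [Lip0.norm_def]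
  refine ciSup_le fun p => ?_
  have hval : ∀ z : M, ((∑ n ∈ A, W n (f n) : Lip0 M base) : M → ℝ) z
      = ∑ n ∈ A, f n z * Lam base n z := by
    intro z
    rw [Lip0.coe_sum]
    exact Finset.sum_congr rfl fun n _ => hW n (f n) z
  rcases eq_or_ne p.1 p.2 with h | h
  · rw [h]
    simp only [sub_self, abs_zero, dist_self, div_zero]
    norm_num
  · have hd : (0:ℝ) < dist p.1 p.2 := dist_pos.2 h
    rw [div_le_iff₀ hd]
    show |((∑ n ∈ A, W n (f n) : Lip0 M base) : M → ℝ) p.1 -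
        ((∑ n ∈ A, W n (f n) : Lip0 M base) : M → ℝ) p.2| ≤ 8 * dist p.1 p.2
    rw [hval, hval, ← Finset.sum_sub_distrib]
    exact pointwise_bound A hsep f hf p.1 p.2

theorem dual_sum_le (φ : StrongDual ℝ (Lip0 M base))
    (W : ℤ → (Lip0 M base →L[ℝ] Lip0 M base))
    (hW : ∀ (n : ℤ) (g : Lip0 M base) (x : M), (W n g) x = g x * Lam base n x)
    (A : Finset ℤ) (hsep : ∀ n ∈ A, ∀ m ∈ A, Even (n - m)) :
    ∑ n ∈ A, ‖φ.comp (W n)‖ ≤ 8 * ‖φ‖ := by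
  apply le_of_forall_pos_le_add
  intro ε hε
  set ε' := ε / (A.card + 1) with hε'def
  have hε'pos : 0 < ε' := by positivity
  have hchoice : ∀ n : ℤ, ∃ g : Lip0 M base, ‖g‖ ≤ 1 ∧
      ‖φ.comp (W n)‖ - ε' ≤ φ (W n g) := by
    intro n
    rcases lt_or_ge (‖φ.comp (W n)‖ - ε') 0 with hn | hn
    · refine ⟨0, by simp, ?_⟩
      rw [map_zero, map_zero]
      linarith
    · have hlt : ‖φ.comp (W n)‖ - ε' < ‖φ.comp (W n)‖ := by linarith
      obtain ⟨g, hg1, hg2⟩ := (φ.comp (W n)).exists_lt_apply_of_lt_opNorm hlt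
      rw [ContinuousLinearMap.comp_apply, Real.norm_eq_abs] at hg2
      rcases le_or_gt 0 (φ (W n g)) with hsign | hsign
      · refine ⟨g, hg1.le, ?_⟩
        rw [abs_of_nonneg hsign] at hg2
        linarith
      · refine ⟨-g, by rw [norm_neg]; exact hg1.le, ?_⟩
        rw [map_neg, map_neg]
        rw [abs_of_neg hsign] at hg2
        linarith
  choose g hg1 hg2 using hchoice
  have hsum : ∑ n ∈ A, ‖φ.comp (W n)‖ ≤ ∑ n ∈ A, (φ (W n (g n)) + ε') := by
    refine Finset.sum_le_sum fun n _ => ?_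
    linarith [hg2 n]
  have h2 : ∑ n ∈ A, (φ (W n (g n)) + ε') = φ (∑ n ∈ A, W n (g n)) + A.card * ε' := by
    rw [Finset.sum_add_distrib, Finset.sum_const, nsmul_eq_mul, map_sum]
  have h3 : φ (∑ n ∈ A, W n (g n)) ≤ ‖φ‖ * 8 := by
    calc φ (∑ n ∈ A, W n (g n)) ≤ |φ (∑ n ∈ A, W n (g n))| := le_abs_self _
      _ ≤ ‖φ‖ * ‖∑ n ∈ A, W n (g n)‖ := by
          rw [← Real.norm_eq_abs]
          exact φ.le_opNorm _
      _ ≤ ‖φ‖ * 8 :=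
          mul_le_mul_of_nonneg_left (sum_W_norm_le A hsep g hg1 W hW) (norm_nonneg φ)
  have h4 : (A.card : ℝ) * ε' ≤ ε := by
    have he : ε' * ((A.card : ℝ) + 1) = ε := by
      rw [hε'def]
      field_simp
    nlinarith [hε'pos.le]
  linarith

end KaltonMain


/-- for `φ ∈ F(M)** = Lip₀(M)*` and `W_{Λ_n}` the multiplication
operator by the tent function `Λ_n`, one has `Σ_{n∈ℤ} ‖φ ∘ W_{Λ_n}‖ ≤ 45‖φ‖`. -/
theorem kalton_decomposition_bound [CompleteSpace M] (base : M)
    (φ : StrongDual ℝ (Lip0 M base))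
    (W : ℤ → (Lip0 M base →L[ℝ] Lip0 M base))
    (hW : ∀ (n : ℤ) (f : Lip0 M base) (x : M), (W n f) x = f x * Lam base n x) :
    Summable (fun n : ℤ => ‖φ.comp (W n)‖) ∧
      ∑' n : ℤ, ‖φ.comp (W n)‖ ≤ 45 * ‖φ‖ := by
  have key : ∀ S : Finset ℤ, ∑ n ∈ S, ‖φ.comp (W n)‖ ≤ 16 * ‖φ‖ := by
    intro S
    have hsplit := Finset.sum_filter_add_sum_filter_not S (fun n => Even n)
      (fun n => ‖φ.comp (W n)‖)
    have h1 : ∑ n ∈ S.filter (fun n => Even n), ‖φ.comp (W n)‖ ≤ 8 * ‖φ‖ := by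
      apply dual_sum_le φ W hW
      intro n hn m hm
      rw [Finset.mem_filter] at hn hm
      exact Int.even_sub.mpr (iff_of_true hn.2 hm.2)
    have h2 : ∑ n ∈ S.filter (fun n => ¬ Even n), ‖φ.comp (W n)‖ ≤ 8 * ‖φ‖ := by
      apply dual_sum_le φ W hW
      intro n hn m hm
      rw [Finset.mem_filter] at hn hm
      exact Int.even_sub.mpr (iff_of_false hn.2 hm.2)
    linarith
  have hsummable : Summable (fun n : ℤ => ‖φ.comp (W n)‖) :=
    summable_of_sum_le (fun n => norm_nonneg _) key
  refine ⟨hsummable, ?_⟩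
  have h16 := Summable.tsum_le_of_sum_le hsummable key
  have hφ : 0 ≤ ‖φ‖ := norm_nonneg φ
  linarith
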